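/- Let T be a compact operator on a Hilbert space H with Hilbert basis (e_j)_{j∈J} indexed by a countable set J. Then for any finite subset I ⊂ J with #I = n, the (n+1)-st singular value of T satisfies μ_{n+1}(T) ≤ Σ_{j ∈ J∖I} ‖T e_j‖. -/

import Mathlib

open ContinuousLinearMap
open scoped InnerProductSpace ENNReal

/-- The `(n+1)`-st singular value of a bounded operator `T` on a complex Hilbert space, via the
min-max principle: the infimum over `n`-dimensional subspaces `F` of the supremum over unit
vectors `w ⊥ F` of `⟪√(T*T) w, w⟫`. -/
noncomputable def singularValue {H : Type*} [NormedAddCommGroup H] [InnerProductSpace ℂ H]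
    [CompleteSpace H] (T : H →L[ℂ] H) (n : ℕ) : ℝ :=
  ⨅ F : {F : Submodule ℂ H // Module.finrank ℂ F = n},
    ⨆ w : {w : H // w ∈ (F : Submodule ℂ H)ᗮ ∧ ‖w‖ = 1},
      (⟪(CFC.sqrt (ContinuousLinearMap.adjoint T ∘L T)) (w : H), (w : H)⟫_ℂ).re

section aux
variable {H : Type*} [NormedAddCommGroup H] [InnerProductSpace ℂ H] [CompleteSpace H]

lemma aux_pos (T : H →L[ℂ] H) : (0 : H →L[ℂ] H) ≤ ContinuousLinearMap.adjoint T ∘L T := by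
  rw [ContinuousLinearMap.nonneg_iff_isPositive]
  simpa [ContinuousLinearMap.one_def] using ContinuousLinearMap.isPositive_one.adjoint_conj T

lemma aux_sqrt_pos (T : H →L[ℂ] H) :
    (CFC.sqrt (ContinuousLinearMap.adjoint T ∘L T)).IsPositive := by
  rw [← ContinuousLinearMap.nonneg_iff_isPositive]
  exact CFC.sqrt_nonneg _

lemma aux_norm_sqrt (T : H →L[ℂ] H) (w : H) :
    ‖CFC.sqrt (ContinuousLinearMap.adjoint T ∘L T) w‖ = ‖T w‖ := by
  set S := CFC.sqrt (ContinuousLinearMap.adjoint T ∘L T) with hS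
  have hsa : IsSelfAdjoint S := (aux_sqrt_pos T).isSelfAdjoint
  have hsq : S ∘L S = ContinuousLinearMap.adjoint T ∘L T := by
    have := CFC.sq_sqrt (ContinuousLinearMap.adjoint T ∘L T) (aux_pos T)
    rw [sq] at this
    simpa [mul_def] using this
  have key : (⟪S w, S w⟫_ℂ) = ⟪T w, T w⟫_ℂ := by
    have h1 : ⟪S w, S w⟫_ℂ = ⟪w, S (S w)⟫_ℂ := by
      rw [← ContinuousLinearMap.adjoint_inner_right]
      rw [hsa.adjoint_eq]
    rw [h1]
    have h2 : S (S w) = (ContinuousLinearMap.adjoint T) (T w) := by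
      have := congrArg (fun A : H →L[ℂ] H => A w) hsq
      simpa using this
    rw [h2, ContinuousLinearMap.adjoint_inner_right]
  rw [inner_self_eq_norm_sq_to_K (𝕜 := ℂ), inner_self_eq_norm_sq_to_K (𝕜 := ℂ)] at key
  have h3 : (‖S w‖ : ℝ) ^ 2 = ‖T w‖ ^ 2 := by exact_mod_cast key
  nlinarith [norm_nonneg (S w), norm_nonneg (T w)]

end aux

/-- for a compact operator `T` on a Hilbert space with Hilbert basis `(e_j)_{j∈J}`,
`J` countable, and any finite `I ⊆ J` with `#I = n`, one has
`μ_{n+1}(T) ≤ Σ_{j ∈ J∖I} ‖T e_j‖`. -/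
theorem singularValue_le_tsum_norm
    {H : Type*} [NormedAddCommGroup H] [InnerProductSpace ℂ H] [CompleteSpace H]
    {J : Type*} [Countable J] (e : HilbertBasis J ℂ H)
    (T : H →L[ℂ] H) (hT : IsCompactOperator T)
    (I : Finset J) (n : ℕ) (hI : I.card = n) :
    ENNReal.ofReal (singularValue T n) ≤
      ∑' j : {j : J // j ∉ I}, ENNReal.ofReal ‖T (e j)‖ := by
  by_cases htop : (∑' j : {j : J // j ∉ I}, ENNReal.ofReal ‖T (e j)‖) = ⊤
  · rw [htop]; exact le_top
  -- extract real summability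
  have hsum_nn : Summable (fun j : {j : J // j ∉ I} => ‖T (e j)‖₊) := by
    rw [← ENNReal.tsum_coe_ne_top_iff_summable]
    simp_rw [← enorm_eq_nnnorm, ← ofReal_norm]
    exact htop
  have hsum : Summable (fun j : {j : J // j ∉ I} => ‖T (e j)‖) := by
    simpa using NNReal.summable_coe.mpr hsum_nn
  set C : ℝ := ∑' j : {j : J // j ∉ I}, ‖T (e j)‖ with hC
  have hC0 : 0 ≤ C := tsum_nonneg fun _ => norm_nonneg _
  -- the subspace spanned by e over I
  set F : Submodule ℂ H := Submodule.span ℂ (Set.range (fun i : I => e i)) with hF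
  have hli : LinearIndependent ℂ (fun i : I => e (i : J)) :=
    (e.orthonormal.linearIndependent).comp Subtype.val Subtype.val_injective
  have hFrank : Module.finrank ℂ F = n := by
    rw [hF, finrank_span_eq_card hli]
    simpa using hI
  -- key bound for unit vectors orthogonal to F
  have key : ∀ w : H, w ∈ Fᗮ → ‖w‖ = 1 →
      (⟪(CFC.sqrt (ContinuousLinearMap.adjoint T ∘L T)) w, w⟫_ℂ).re ≤ C := by
    intro w hw hw1
    have horth : ∀ j ∈ I, ⟪e j, w⟫_ℂ = 0 := by
      intro j hj
      exact (Submodule.mem_orthogonal F w).mp hw _ (Submodule.subset_span ⟨⟨j, hj⟩, rfl⟩)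
    have hrepr : HasSum (fun j : J => ⟪e j, w⟫_ℂ • e j) w := by
      simpa [HilbertBasis.repr_apply_apply] using e.hasSum_repr w
    have hsub : HasSum (fun j : {j : J // j ∉ I} => ⟪e (j : J), w⟫_ℂ • e (j : J)) w := by
      apply (hasSum_subtype_iff_of_support_subset ?_).mpr hrepr
      intro j hj
      simp only [Function.mem_support] at hj
      by_contra hjI
      change ¬ (j ∉ I) at hjI
      exact hj (by rw [horth j (not_not.mp hjI), zero_smul])
    have hTsum : HasSum (fun j : {j : J // j ∉ I} => ⟪e (j : J), w⟫_ℂ • T (e (j : J))) (T w) := by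
      simpa using T.hasSum hsub
    have hcoef : ∀ j : {j : J // j ∉ I}, ‖⟪e (j : J), w⟫_ℂ • T (e (j : J))‖ ≤ ‖T (e (j : J))‖ := by
      intro j
      rw [norm_smul]
      calc ‖⟪e (j : J), w⟫_ℂ‖ * ‖T (e (j : J))‖
          ≤ 1 * ‖T (e (j : J))‖ := by
            apply mul_le_mul_of_nonneg_right _ (norm_nonneg _)
            calc ‖⟪e (j : J), w⟫_ℂ‖ ≤ ‖e (j : J)‖ * ‖w‖ := norm_inner_le_norm _ _
              _ = 1 := by rw [hw1, e.orthonormal.1]; ring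
        _ = _ := one_mul _
    have hsum' : Summable (fun j : {j : J // j ∉ I} => ‖⟪e (j : J), w⟫_ℂ • T (e (j : J))‖) :=
      Summable.of_nonneg_of_le (fun _ => norm_nonneg _) hcoef hsum
    have hTw : ‖T w‖ ≤ C := by
      rw [← hTsum.tsum_eq]
      exact (norm_tsum_le_tsum_norm hsum').trans (Summable.tsum_le_tsum hcoef hsum' hsum)
    calc (⟪(CFC.sqrt (ContinuousLinearMap.adjoint T ∘L T)) w, w⟫_ℂ).re
        ≤ ‖⟪(CFC.sqrt (ContinuousLinearMap.adjoint T ∘L T)) w, w⟫_ℂ‖ := Complex.re_le_norm _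
      _ ≤ ‖(CFC.sqrt (ContinuousLinearMap.adjoint T ∘L T)) w‖ * ‖w‖ := norm_inner_le_norm _ _
      _ = ‖T w‖ := by rw [aux_norm_sqrt, hw1, mul_one]
      _ ≤ C := hTw
  -- now bound the singular value
  have hsv : singularValue T n ≤ C := by
    have hbdd : BddBelow (Set.range fun F : {F : Submodule ℂ H // Module.finrank ℂ F = n} =>
        ⨆ w : {w : H // w ∈ (F : Submodule ℂ H)ᗮ ∧ ‖w‖ = 1},
          (⟪(CFC.sqrt (ContinuousLinearMap.adjoint T ∘L T)) (w : H), (w : H)⟫_ℂ).re) := by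
      refine ⟨0, ?_⟩
      rintro x ⟨G, rfl⟩
      exact Real.iSup_nonneg fun w => (aux_sqrt_pos T).re_inner_nonneg_left _
    refine le_trans (ciInf_le hbdd ⟨F, hFrank⟩) ?_
    exact Real.iSup_le (fun w => key w w.2.1 w.2.2) hC0
  calc ENNReal.ofReal (singularValue T n) ≤ ENNReal.ofReal C := ENNReal.ofReal_le_ofReal hsv
    _ = ∑' j : {j : J // j ∉ I}, ENNReal.ofReal ‖T (e j)‖ :=
      ENNReal.ofReal_tsum_of_nonneg (fun _ => norm_nonneg _) hsum
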